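/- arXiv:2002.11582 — 3 statements merged into one kernel-verified Lean document; each statement's English description precedes it below -/
import Mathlib

section
/- Let f : ℝ^d → ℝ have L-Lipschitz continuous gradient and g : ℝ^d → ℝ be convex. Let F = f + g, η ∈ (0, 1/L], and x⁺ := prox_{ηg}(x − η∇f(x)). Then F(x⁺) ≤ F(x) − (η/2)‖G_η(x, ∇f(x))‖², where G_η(x,u) := (1/η)(x − prox_{ηg}(x − ηu)). -/
open RealInnerProductSpace

theorem descent_lemma' {d : ℕ} {L : ℝ} (hL : 0 ≤ L)
    {f : EuclideanSpace ℝ (Fin d) → ℝ}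
    {f' : EuclideanSpace ℝ (Fin d) → EuclideanSpace ℝ (Fin d)}
    (hf : ∀ y, HasGradientAt f (f' y) y)
    (hlip : ∀ y z : EuclideanSpace ℝ (Fin d), ‖f' y - f' z‖ ≤ L * ‖y - z‖)
    (x y : EuclideanSpace ℝ (Fin d)) :
    f y ≤ f x + ⟪f' x, y - x⟫ + L / 2 * ‖y - x‖ ^ 2 := by
  set Δ := y - x with hΔ
  set φ : ℝ → ℝ := fun t => f (x + t • Δ) - t * ⟪f' x, Δ⟫ - L / 2 * t ^ 2 * ‖Δ‖ ^ 2 with hφ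
  have hderiv : ∀ t : ℝ, HasDerivAt φ
      (⟪f' (x + t • Δ), Δ⟫ - ⟪f' x, Δ⟫ - L * t * ‖Δ‖ ^ 2) t := by
    intro t
    have hγ : HasDerivAt (fun t : ℝ => x + t • Δ) Δ t := by
      simpa using ((hasDerivAt_id t).smul_const Δ).const_add x
    have h1 : HasDerivAt (fun t : ℝ => f (x + t • Δ)) ⟪f' (x + t • Δ), Δ⟫ t := by
      have := (hf (x + t • Δ)).hasFDerivAt.comp_hasDerivAt t hγ
      simpa [InnerProductSpace.toDual_apply_apply, Function.comp_def] using this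
    have h2 : HasDerivAt (fun t : ℝ => t * ⟪f' x, Δ⟫) ⟪f' x, Δ⟫ t := by
      simpa using (hasDerivAt_id t).mul_const (⟪f' x, Δ⟫)
    have h3 : HasDerivAt (fun t : ℝ => L / 2 * t ^ 2 * ‖Δ‖ ^ 2) (L * t * ‖Δ‖ ^ 2) t := by
      have := ((hasDerivAt_pow 2 t).const_mul (L / 2)).mul_const (‖Δ‖ ^ 2)
      refine this.congr_deriv ?_
      ring
    exact (h1.sub h2).sub h3
  have hanti : AntitoneOn φ (Set.Icc (0:ℝ) 1) := by
    apply antitoneOn_of_deriv_nonpos (convex_Icc 0 1)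
    · exact Differentiable.continuous (fun t => (hderiv t).differentiableAt) |>.continuousOn
    · exact fun t _ => (hderiv t).differentiableAt.differentiableWithinAt
    · intro t ht
      rw [interior_Icc] at ht
      rw [(hderiv t).deriv]
      have h1 : ⟪f' (x + t • Δ) - f' x, Δ⟫ ≤ ‖f' (x + t • Δ) - f' x‖ * ‖Δ‖ :=
        real_inner_le_norm _ _
      have h2 : ‖f' (x + t • Δ) - f' x‖ ≤ L * (t * ‖Δ‖) := by
        have := hlip (x + t • Δ) x
        simpa [norm_smul, abs_of_pos ht.1] using this
      have h3 : ‖f' (x + t • Δ) - f' x‖ * ‖Δ‖ ≤ L * (t * ‖Δ‖) * ‖Δ‖ :=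
        mul_le_mul_of_nonneg_right h2 (norm_nonneg _)
      rw [inner_sub_left] at h1
      nlinarith [norm_nonneg Δ]
  have key := hanti (Set.left_mem_Icc.2 zero_le_one) (Set.right_mem_Icc.2 zero_le_one) zero_le_one
  have h0 : φ 0 = f x := by simp [hφ]
  have h1 : φ 1 = f y - ⟪f' x, Δ⟫ - L / 2 * ‖Δ‖ ^ 2 := by
    simp [hφ, hΔ]
  rw [h0, h1] at key
  linarith

theorem prox_subgrad' {d : ℕ} {g : EuclideanSpace ℝ (Fin d) → ℝ}
    (hg_conv : ConvexOn ℝ Set.univ g) {η : ℝ} (hη : 0 < η)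
    (v x xplus : EuclideanSpace ℝ (Fin d))
    (hxplus : ∀ w : EuclideanSpace ℝ (Fin d),
      g xplus + (1 / (2 * η)) * ‖xplus - v‖ ^ 2 ≤ g w + (1 / (2 * η)) * ‖w - v‖ ^ 2) :
    g xplus ≤ g x + (1 / η) * ⟪xplus - v, x - xplus⟫ := by
  set Δ := x - xplus with hΔ
  have main : ∀ t : ℝ, 0 < t → t ≤ 1 →
      g xplus ≤ g x + (1 / η) * ⟪xplus - v, Δ⟫ + t / (2 * η) * ‖Δ‖ ^ 2 := by
    intro t ht ht1
    have hconv := hg_conv.2 (Set.mem_univ xplus) (Set.mem_univ x)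
      (by linarith : (0:ℝ) ≤ 1 - t) (le_of_lt ht) (by ring)
    have heq : (1 - t) • xplus + t • x = xplus + t • Δ := by
      rw [hΔ]; module
    rw [heq, smul_eq_mul, smul_eq_mul] at hconv
    have hx := hxplus (xplus + t • Δ)
    have hnorm : ‖xplus + t • Δ - v‖ ^ 2 =
        ‖xplus - v‖ ^ 2 + 2 * (t * ⟪xplus - v, Δ⟫) + t ^ 2 * ‖Δ‖ ^ 2 := by
      have : xplus + t • Δ - v = (xplus - v) + t • Δ := by abel
      rw [this, norm_add_sq_real, real_inner_smul_right, norm_smul]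
      rw [Real.norm_eq_abs, abs_of_pos ht]
      ring
    rw [hnorm] at hx
    generalize hIg : ⟪xplus - v, Δ⟫ = I at hx ⊢
    generalize hNg : ‖Δ‖ ^ 2 = N at hx ⊢
    generalize hMg : ‖xplus - v‖ ^ 2 = M at hx
    rw [← mul_le_mul_iff_right₀ ht]
    have e1 : (1 / (2 * η)) * (M + 2 * (t * I) + t ^ 2 * N)
        = (1 / (2 * η)) * M + t * ((1 / η) * I + t / (2 * η) * N) := by
      field_simp
      ring
    rw [e1] at hx
    nlinarith [hx, hconv]
  by_cases hΔ0 : ‖Δ‖ = 0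
  · have := main 1 one_pos le_rfl
    rw [hΔ0] at this
    simpa using this
  · apply le_of_forall_pos_le_add
    intro ε hε
    have hΔpos : 0 < ‖Δ‖ ^ 2 := by positivity
    set t := min 1 (2 * η * ε / ‖Δ‖ ^ 2) with htdef
    have ht0 : 0 < t := lt_min one_pos (by positivity)
    have := main t ht0 (min_le_left _ _)
    have hterm : t / (2 * η) * ‖Δ‖ ^ 2 ≤ ε := by
      have h1 : t ≤ 2 * η * ε / ‖Δ‖ ^ 2 := min_le_right _ _
      rw [div_mul_eq_mul_div, div_le_iff₀ (by linarith : (0:ℝ) < 2 * η)]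
      calc t * ‖Δ‖ ^ 2 ≤ (2 * η * ε / ‖Δ‖ ^ 2) * ‖Δ‖ ^ 2 :=
            mul_le_mul_of_nonneg_right h1 (le_of_lt hΔpos)
        _ = ε * (2 * η) := by field_simp
    linarith

/-- Proximal gradient descent step decrease. With `∇f` `L`-Lipschitz,
`g` convex, `F = f + g`, `η ∈ (0, 1/L]`, and `x⁺ = prox_{ηg}(x - η∇f(x))`:
`F(x⁺) ≤ F(x) - (η/2)‖G_η(x, ∇f(x))‖²`, where `G_η(x,u) = (1/η)(x - prox_{ηg}(x - ηu))`. -/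
theorem prox_gradient_descent_step {d : ℕ} (L : ℝ) (hL : 0 < L)
    (f g : EuclideanSpace ℝ (Fin d) → ℝ)
    (f' : EuclideanSpace ℝ (Fin d) → EuclideanSpace ℝ (Fin d))
    (hf : ∀ y, HasGradientAt f (f' y) y)
    (hlip : ∀ y z : EuclideanSpace ℝ (Fin d), ‖f' y - f' z‖ ≤ L * ‖y - z‖)
    (hg_conv : ConvexOn ℝ Set.univ g)
    (η : ℝ) (hη : 0 < η) (hηL : η ≤ 1 / L)
    (x xplus : EuclideanSpace ℝ (Fin d))
    (hxplus : ∀ w : EuclideanSpace ℝ (Fin d),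
      g xplus + (1 / (2 * η)) * ‖xplus - (x - η • f' x)‖ ^ 2 ≤
        g w + (1 / (2 * η)) * ‖w - (x - η • f' x)‖ ^ 2) :
    f xplus + g xplus ≤ f x + g x - (η / 2) * ‖(1 / η) • (x - xplus)‖ ^ 2 := by
  have hdesc := descent_lemma' (le_of_lt hL) hf hlip x xplus
  have hsub := prox_subgrad' hg_conv hη (x - η • f' x) x xplus hxplus
  have hinner : ⟪xplus - (x - η • f' x), x - xplus⟫ =
      -‖x - xplus‖ ^ 2 + η * ⟪f' x, x - xplus⟫ := by
    have h : xplus - (x - η • f' x) = -(x - xplus) + η • f' x := by abel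
    rw [h, inner_add_left, real_inner_smul_left, inner_neg_left,
      real_inner_self_eq_norm_sq]
  have hinner2 : ⟪f' x, xplus - x⟫ = -⟪f' x, x - xplus⟫ := by
    rw [← inner_neg_right]
    congr 1
    abel
  have hnorm1 : ‖xplus - x‖ = ‖x - xplus‖ := norm_sub_rev _ _
  have hnorm2 : ‖(1 / η) • (x - xplus)‖ ^ 2 = (1 / η) ^ 2 * ‖x - xplus‖ ^ 2 := by
    rw [norm_smul, Real.norm_eq_abs, abs_of_pos (by positivity), mul_pow]
  have hLη : L * η ≤ 1 := by
    rw [le_div_iff₀ hL] at hηL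
    linarith
  rw [hinner] at hsub
  rw [hinner2, hnorm1] at hdesc
  rw [hnorm2]
  generalize hAg : ⟪f' x, x - xplus⟫ = A at hsub hdesc
  generalize hng : ‖x - xplus‖ ^ 2 = n at hsub hdesc ⊢
  have hn : (0:ℝ) ≤ n := by rw [← hng]; positivity
  have hL2 : L / 2 ≤ 1 / (2 * η) := by
    rw [div_le_div_iff₀ two_pos (by linarith : (0:ℝ) < 2 * η)]
    nlinarith
  have e2 : (1 / η) * (-n + η * A) = -(n / η) + A := by
    field_simp
  have e3 : (η / 2) * ((1 / η) ^ 2 * n) = n / (2 * η) := by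
    field_simp
  have e4 : n / η = n / (2 * η) + n / (2 * η) := by
    ring
  have e5 : L / 2 * n ≤ 1 / (2 * η) * n := mul_le_mul_of_nonneg_right hL2 hn
  have e6 : 1 / (2 * η) * n = n / (2 * η) := by ring
  rw [e2] at hsub
  rw [e3]
  linarith
end

section
/- Let (a_t) be a nonnegative real sequence satisfying a_{t+1} ≤ a_t − c·a_t^{2(1−θ)} for all t ≥ t₀, where c > 0 and θ ∈ (0, 1/2). Then there exists a constant C > 0 such that a_t ≤ C·(t − t₀)^{−1/(1−2θ)} for all t > t₀. -/
open Real

/-- Key step: one-step drop of the recursion increases `x ^ (-ν)` by at least `c * ν`. -/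
lemma kl_key_step {ν c x y : ℝ} (hν : 0 < ν) (hν1 : ν < 1) (hc : 0 < c)
    (hx : 0 ≤ x) (hy : 0 < y) (h : y ≤ x - c * x ^ (1 + ν)) :
    x ^ (-ν) + c * ν ≤ y ^ (-ν) := by
  have hxp : 0 ≤ x ^ (1 + ν) := Real.rpow_nonneg hx _
  have hx0 : 0 < x := lt_of_lt_of_le hy (by nlinarith)
  have hyx : y < x := lt_of_le_of_lt h (by nlinarith [Real.rpow_pos_of_pos hx0 (1 + ν)])
  set r : ℝ := y / x with hr
  have hr0 : 0 < r := div_pos hy hx0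
  have hr1 : r < 1 := (div_lt_one hx0).mpr hyx
  -- Bernoulli: r ^ ν ≤ 1 - ν * (1 - r)
  have hb : r ^ ν ≤ 1 - ν * (1 - r) := by
    have := rpow_one_add_le_one_add_mul_self (s := r - 1) (by linarith) hν.le hν1.le
    simpa using this.trans_eq (by ring)
  have hu : 0 < r ^ ν := Real.rpow_pos_of_pos hr0 ν
  -- hence 1 + ν * (1 - r) ≤ r ^ (-ν)
  have hinv : 1 + ν * (1 - r) ≤ r ^ (-ν) := by
    rw [Real.rpow_neg hr0.le, ← one_div]
    rw [le_div_iff₀ hu]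
    nlinarith [sq_nonneg (ν * (1 - r))]
  -- split y ^ (-ν)
  have hsplit : y ^ (-ν) = x ^ (-ν) * r ^ (-ν) := by
    rw [hr, Real.div_rpow hy.le hx0.le, Real.rpow_neg hy.le, Real.rpow_neg hx0.le]
    field_simp
  have hxnu : 0 < x ^ (-ν) := Real.rpow_pos_of_pos hx0 _
  have hstep : x ^ (-ν) * (1 + ν * (1 - r)) ≤ y ^ (-ν) := by
    rw [hsplit]
    exact mul_le_mul_of_nonneg_left hinv hxnu.le
  refine le_trans ?_ hstep
  -- x ^ (-ν) * ν * (1 - r) ≥ c * ν since (1 - r) = (x - y)/x ≥ c * x^ν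
  have h1r : c * x ^ ν ≤ 1 - r := by
    rw [hr]
    have hd : (x - y) / x = 1 - y / x := by field_simp
    rw [← hd, le_div_iff₀ hx0]
    calc c * x ^ ν * x = c * x ^ (1 + ν) := by
          rw [Real.rpow_one_add' hx0.le (by positivity)]; ring
      _ ≤ x - y := by linarith
  have hxx : x ^ (-ν) * x ^ ν = 1 := by
    rw [← Real.rpow_add hx0]; simp
  have : x ^ (-ν) * (ν * (c * x ^ ν)) ≤ x ^ (-ν) * (ν * (1 - r)) := by
    apply mul_le_mul_of_nonneg_left _ hxnu.le
    exact mul_le_mul_of_nonneg_left h1r hν.le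
  calc x ^ (-ν) + c * ν = x ^ (-ν) + x ^ (-ν) * (ν * (c * x ^ ν)) := by
        rw [show x ^ (-ν) * (ν * (c * x ^ ν)) = (x ^ (-ν) * x ^ ν) * (ν * c) by ring, hxx]; ring
    _ ≤ x ^ (-ν) + x ^ (-ν) * (ν * (1 - r)) := by linarith
    _ = x ^ (-ν) * (1 + ν * (1 - r)) := by ring

/-- Sublinear rate from the KŁ recursion with exponent `θ ∈ (0, 1/2)`:
if `a_{t+1} ≤ a_t - c·a_t^(2·(1-θ))` for `t ≥ t₀`, `a_t ≥ 0`, `c > 0`, then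
`a_t ≤ C·(t - t₀)^(-1/(1-2θ))` for all `t > t₀`, for some `C > 0`. -/
theorem sublinear_rate_KL_recursion (a : ℕ → ℝ) (ha : ∀ t, 0 ≤ a t)
    (c θ : ℝ) (hc : 0 < c) (hθ : θ ∈ Set.Ioo (0 : ℝ) (1 / 2)) (t₀ : ℕ)
    (hrec : ∀ t, t₀ ≤ t → a (t + 1) ≤ a t - c * (a t) ^ (2 * (1 - θ))) :
    ∃ C : ℝ, 0 < C ∧ ∀ t, t₀ < t → a t ≤ C * ((t : ℝ) - t₀) ^ (-(1 / (1 - 2 * θ))) := by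
  obtain ⟨hθ0, hθ2⟩ := hθ
  set ν : ℝ := 1 - 2 * θ with hνdef
  have hν : 0 < ν := by simp only [hνdef]; linarith
  have hν1 : ν < 1 := by simp only [hνdef]; linarith
  have hrec' : ∀ t, t₀ ≤ t → a (t + 1) ≤ a t - c * (a t) ^ (1 + ν) := by
    intro t htt
    have : (1 : ℝ) + ν = 2 * (1 - θ) := by simp only [hνdef]; ring
    rw [this]; exact hrec t htt
  refine ⟨(c * ν) ^ (-(1 / ν)), Real.rpow_pos_of_pos (mul_pos hc hν) _, ?_⟩
  intro t ht
  have htR : (0 : ℝ) < (t : ℝ) - t₀ := by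
    have : (t₀ : ℝ) < t := by exact_mod_cast ht
    linarith
  by_cases h0 : ∃ s, t₀ ≤ s ∧ s ≤ t ∧ a s = 0
  · -- once zero, always zero
    obtain ⟨s, hs0, hst, hsz⟩ := h0
    have hzero : ∀ k, a (s + k) = 0 := by
      intro k
      induction k with
      | zero => simpa using hsz
      | succ n ih =>
        have hle := hrec' (s + n) (le_trans hs0 (Nat.le_add_right _ _))
        rw [ih, Real.zero_rpow (by positivity)] at hle
        have hge := ha (s + n + 1)
        show a (s + n + 1) = 0
        linarith
    have hat : a t = 0 := by
      obtain ⟨k, rfl⟩ := Nat.exists_eq_add_of_le hst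
      exact hzero k
    rw [hat]
    positivity
  · push_neg at h0
    have hpos : ∀ s, t₀ ≤ s → s ≤ t → 0 < a s :=
      fun s h1 h2 => lt_of_le_of_ne (ha s) (Ne.symm (h0 s h1 h2))
    -- by induction: c*ν*(u - t₀) ≤ (a u)^(-ν) for t₀ ≤ u ≤ t
    have hmain : ∀ u, t₀ ≤ u → u ≤ t → c * ν * ((u : ℝ) - t₀) ≤ (a u) ^ (-ν) := by
      intro u hu
      induction u, hu using Nat.le_induction with
      | base =>
        intro _
        simp only [sub_self, mul_zero]
        exact (Real.rpow_pos_of_pos (hpos t₀ le_rfl (le_of_lt ht)) _).le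
      | succ n hn ih =>
        intro hnt
        have hnt' : n ≤ t := le_trans (Nat.le_succ n) hnt
        have ihv := ih hnt'
        have hkey := kl_key_step hν hν1 hc (ha n) (hpos (n + 1) (by omega) hnt) (hrec' n hn)
        have : c * ν * (((n : ℕ) : ℝ) - t₀) + c * ν ≤ (a (n + 1)) ^ (-ν) := by
          linarith
        calc c * ν * (((n + 1 : ℕ) : ℝ) - t₀) = c * ν * ((n : ℝ) - t₀) + c * ν := by
              push_cast; ring
          _ ≤ (a (n + 1)) ^ (-ν) := this
    have hM : c * ν * ((t : ℝ) - t₀) ≤ (a t) ^ (-ν) := hmain t ht.le le_rfl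
    have hMpos : 0 < c * ν * ((t : ℝ) - t₀) := by positivity
    have hatpos : 0 < a t := hpos t (le_of_lt ht) le_rfl
    -- invert
    have h2 : ((a t) ^ (-ν)) ^ (-(1 / ν)) ≤ (c * ν * ((t : ℝ) - t₀)) ^ (-(1 / ν)) :=
      Real.rpow_le_rpow_of_nonpos hMpos hM (by
        have : (0:ℝ) < 1 / ν := by positivity
        linarith)
    have h3 : ((a t) ^ (-ν)) ^ (-(1 / ν)) = a t := by
      rw [← Real.rpow_mul hatpos.le, show (-ν) * (-(1 / ν)) = 1 by field_simp,
        Real.rpow_one]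
    have h4 : (c * ν * ((t : ℝ) - t₀)) ^ (-(1 / ν))
        = (c * ν) ^ (-(1 / ν)) * ((t : ℝ) - t₀) ^ (-(1 / ν)) :=
      Real.mul_rpow (by positivity) htR.le
    calc a t = ((a t) ^ (-ν)) ^ (-(1 / ν)) := h3.symm
      _ ≤ (c * ν * ((t : ℝ) - t₀)) ^ (-(1 / ν)) := h2
      _ = (c * ν) ^ (-(1 / ν)) * ((t : ℝ) - t₀) ^ (-(1 / ν)) := h4
end

section
/- Suppose a nonnegative sequence (r_t) satisfies r_t ≤ Σ_{s=t}^∞ b_s for all t, where b_s ≥ 0 and Σ b_s < ∞, and additionally Σ_{s=t}^∞ b_s ≤ M·b_{t−1}^{θ/(1−θ)} for some M > 0 and θ ∈ (0, 1/2) eventually. Then r_t ≤ Θ(t^{−θ/(1−2θ)}) as t → ∞. -/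
lemma convex_rpow_aux {q a b : ℝ} (hq : 0 < q) (ha : 0 < a) (hab : a ≤ b) :
    b ^ (-q) + q * (b - a) * b ^ (-(q + 1)) ≤ a ^ (-q) := by
  have hb : 0 < b := lt_of_lt_of_le ha hab
  have hu : 0 < a / b := div_pos ha hb
  have h1 : 1 + q * (1 - a / b) ≤ (a / b) ^ (-q) := by
    have hlog : Real.log (a / b) ≤ a / b - 1 := Real.log_le_sub_one_of_pos hu
    have hexp : -q * Real.log (a / b) + 1 ≤ Real.exp (Real.log (a / b) * -q) := by
      rw [mul_comm]; exact Real.add_one_le_exp _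
    rw [Real.rpow_def_of_pos hu]
    nlinarith [mul_le_mul_of_nonneg_left hlog hq.le]
  have hbq : 0 < b ^ (-q) := Real.rpow_pos_of_pos hb _
  have key : (1 + q * (1 - a / b)) * b ^ (-q) ≤ (a / b) ^ (-q) * b ^ (-q) :=
    mul_le_mul_of_nonneg_right h1 hbq.le
  have e1 : (a / b) ^ (-q) * b ^ (-q) = a ^ (-q) := by
    rw [Real.div_rpow ha.le hb.le]
    field_simp
  have e2 : b ^ (-(q + 1)) = b ^ (-q) / b := by
    rw [eq_div_iff hb.ne']
    have : b ^ (-(q + 1)) * b ^ (1 : ℝ) = b ^ (-(q + 1) + 1) := (Real.rpow_add hb _ _).symm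
    simpa using this.trans (by ring_nf)
  have e3 : (1 + q * (1 - a / b)) * b ^ (-q) = b ^ (-q) + q * (b - a) * b ^ (-(q + 1)) := by
    rw [e2]
    field_simp
  rw [e3, e1] at key
  exact key

/-- antitonicity of `x ↦ x^(-q)` on positives -/
lemma rpow_neg_anti {q a b : ℝ} (hq : 0 ≤ q) (ha : 0 < a) (hab : a ≤ b) :
    b ^ (-q) ≤ a ^ (-q) :=
  Real.rpow_le_rpow_of_nonpos ha hab (neg_nonpos.mpr hq)

set_option maxHeartbeats 800000 in
/-- Sublinear rate for tails. Let `b_s ≥ 0` be summable with tails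
`S t = Σ_{s=t}^∞ b_s`, and suppose `r_t ≤ S_t` for all `t` and eventually
`S_t ≤ M·b_{t-1}^{θ/(1-θ)}` with `M > 0`, `θ ∈ (0, 1/2)`. Then
`r_t = O(t^{-θ/(1-2θ)})`: there exist `C > 0` and `T` with
`r_t ≤ C · t^{-θ/(1-2θ)}` for all `t ≥ T`. -/
theorem sublinear_rate_of_tail_recursion (b r : ℕ → ℝ)
    (hb : ∀ s, 0 ≤ b s) (hr : ∀ t, 0 ≤ r t) (hsum : Summable b)
    (hrS : ∀ t, r t ≤ ∑' s : ℕ, b (t + s))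
    (M θ : ℝ) (hM : 0 < M) (hθ : θ ∈ Set.Ioo (0 : ℝ) (1 / 2))
    (htail : ∃ T₀ : ℕ, ∀ t, T₀ ≤ t → 1 ≤ t →
      (∑' s : ℕ, b (t + s)) ≤ M * (b (t - 1)) ^ (θ / (1 - θ))) :
    ∃ C : ℝ, 0 < C ∧ ∃ T : ℕ, ∀ t, T ≤ t →
      r t ≤ C * (t : ℝ) ^ (-(θ / (1 - 2 * θ))) := by
  obtain ⟨T₀, htail⟩ := htail
  obtain ⟨hθ0, hθ2⟩ := hθ
  set S : ℕ → ℝ := fun t => ∑' s : ℕ, b (t + s) with hSdef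
  have hSsum : ∀ t, Summable (fun s => b (t + s)) := by
    intro t
    have h := (summable_nat_add_iff t).mpr hsum
    simpa [add_comm] using h
  have hSnonneg : ∀ t, 0 ≤ S t := fun t => tsum_nonneg fun s => hb _
  have hSrec : ∀ t, S t = b t + S (t + 1) := by
    intro t
    have h := Summable.tsum_eq_zero_add (hSsum t)
    have h2 : (∑' s : ℕ, b (t + (s + 1))) = ∑' s : ℕ, b (t + 1 + s) :=
      tsum_congr fun s => by congr 1; omega
    simp only [hSdef]
    rw [h, h2]
    norm_num
  have hSanti : Antitone S := antitone_nat_of_succ_le fun t => by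
    have := hSrec t; have := hb t; linarith
  have hrS' : ∀ t, r t ≤ S t := hrS
  by_cases hpos : ∀ t, 0 < S t
  · -- main case
    have hθ2' : (0:ℝ) < 1 - 2 * θ := by linarith
    have hθ1 : (0:ℝ) < 1 - θ := by linarith
    set q : ℝ := (1 - 2 * θ) / θ with hqdef
    have hq : 0 < q := div_pos hθ2' hθ0
    set p : ℝ := q + 1 with hpdef
    have hp0 : 0 < p := by linarith
    have hpval : p = (1 - θ) / θ := by
      rw [hpdef, hqdef]; field_simp; ring
    have hαp : θ / (1 - θ) * p = 1 := by
      rw [hpval]; field_simp [hθ0.ne', hθ1.ne']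
    have heq : θ / (1 - 2 * θ) = 1 / q := by
      rw [hqdef, one_div_div]
    set K : ℝ := M ^ p with hKdef
    have hK : 0 < K := Real.rpow_pos_of_pos hM p
    set T₁ : ℕ := max T₀ 1 with hT₁def
    -- step inequality
    have hstep : ∀ t, T₁ ≤ t → (S (t + 1)) ^ p ≤ K * (S t - S (t + 1)) := by
      intro t ht
      have h1 : S (t + 1) ≤ M * (b t) ^ (θ / (1 - θ)) := by
        have h := htail (t + 1) (by omega) (by omega)
        simpa using h
      have hbt : b t = S t - S (t + 1) := by have := hSrec t; linarith
      have h2 : (S (t + 1)) ^ p ≤ (M * (b t) ^ (θ / (1 - θ))) ^ p :=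
        Real.rpow_le_rpow (hSnonneg _) h1 hp0.le
      have h3 : (M * (b t) ^ (θ / (1 - θ))) ^ p = K * b t := by
        rw [Real.mul_rpow hM.le (Real.rpow_nonneg (hb t) _), ← Real.rpow_mul (hb t), hαp,
          Real.rpow_one, hKdef]
      rw [h3, hbt] at h2
      exact h2
    set c₁ : ℝ := q * (2:ℝ) ^ (-p) / K with hc₁def
    set c₂ : ℝ := ((2:ℝ) ^ q - 1) * (S T₁) ^ (-q) with hc₂def
    set c : ℝ := min c₁ c₂ with hcdef
    have h2p : (0:ℝ) < (2:ℝ) ^ (-p) := Real.rpow_pos_of_pos two_pos _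
    have hc1 : 0 < c₁ := by positivity
    have h2q : (1:ℝ) < (2:ℝ) ^ q := by
      have := Real.rpow_lt_rpow_of_exponent_lt (x := 2) one_lt_two hq
      simpa using this
    have hc2 : 0 < c₂ := mul_pos (by linarith) (Real.rpow_pos_of_pos (hpos T₁) _)
    have hc : 0 < c := lt_min hc1 hc2
    -- key one-step increase
    have hkey : ∀ t, T₁ ≤ t → (S t) ^ (-q) + c ≤ (S (t + 1)) ^ (-q) := by
      intro t ht
      have hSt := hpos t
      have hSt1 := hpos (t + 1)
      have hle : S (t + 1) ≤ S t := hSanti (Nat.le_succ t)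
      have hKstep := hstep t ht
      by_cases hcase : S t / 2 ≤ S (t + 1)
      · have hconv := convex_rpow_aux hq hSt1 hle
        have hA : (0:ℝ) < (S t) ^ p := Real.rpow_pos_of_pos hSt _
        have hApi : (S t) ^ (-(q + 1)) = ((S t) ^ p)⁻¹ := by
          rw [← hpdef, Real.rpow_neg hSt.le]
        have hB : (S t) ^ p * (2:ℝ) ^ (-p) ≤ (S (t + 1)) ^ p := by
          have h4 : (S t / 2) ^ p ≤ (S (t + 1)) ^ p :=
            Real.rpow_le_rpow (by positivity) hcase hp0.le
          have h5 : (S t / 2) ^ p = (S t) ^ p * (2:ℝ) ^ (-p) := by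
            rw [Real.div_rpow hSt.le (by norm_num), Real.rpow_neg (by norm_num : (0:ℝ) ≤ 2)]
            ring
          linarith [h5 ▸ h4]
        have hgoal : c₁ ≤ q * (S t - S (t + 1)) * (S t) ^ (-(q + 1)) := by
          rw [hApi, hc₁def, ← div_eq_mul_inv, div_le_div_iff₀ hK hA]
          have h6 : (S t) ^ p * (2:ℝ) ^ (-p) ≤ K * (S t - S (t + 1)) :=
            le_trans hB hKstep
          nlinarith [mul_le_mul_of_nonneg_left h6 hq.le]
        have hmin : c ≤ c₁ := min_le_left _ _
        linarith
      · push_neg at hcase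
        have h7 : (S t / 2) ^ (-q) ≤ (S (t + 1)) ^ (-q) :=
          rpow_neg_anti hq.le hSt1 hcase.le
        have h8 : (S t / 2) ^ (-q) = (S t) ^ (-q) * (2:ℝ) ^ q := by
          rw [Real.div_rpow hSt.le (by norm_num), Real.rpow_neg (by norm_num : (0:ℝ) ≤ 2)]
          field_simp
        have h9 : (S T₁) ^ (-q) ≤ (S t) ^ (-q) := rpow_neg_anti hq.le (hpos t) (hSanti ht)
        have hmin : c ≤ c₂ := min_le_right _ _
        have hStq : 0 < (S t) ^ (-q) := Real.rpow_pos_of_pos hSt _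
        nlinarith [h8 ▸ h7]
    -- induction
    have hind : ∀ n : ℕ, (S T₁) ^ (-q) + n * c ≤ (S (T₁ + n)) ^ (-q) := by
      intro n
      induction n with
      | zero => simp
      | succ n ih =>
        have h := hkey (T₁ + n) (Nat.le_add_right _ _)
        have e : T₁ + (n + 1) = (T₁ + n) + 1 := rfl
        rw [e]
        push_cast
        linarith
    refine ⟨(c / 2) ^ (-(1 / q)), Real.rpow_pos_of_pos (half_pos hc) _, 2 * T₁ + 2,
      fun t ht => ?_⟩
    have hn : T₁ ≤ t := by omega
    set n : ℕ := t - T₁ with hndef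
    have htn : t = T₁ + n := by omega
    have hncast : (t : ℝ) / 2 ≤ (n : ℝ) := by
      have h1 : t ≤ 2 * n := by omega
      have h2 : (t:ℝ) ≤ 2 * n := by exact_mod_cast h1
      linarith
    have ht0 : (0:ℝ) < t := by
      have h1 : 0 < t := by omega
      exact_mod_cast h1
    have hf : (t : ℝ) * c / 2 ≤ (S t) ^ (-q) := by
      have h1 := hind n
      rw [← htn] at h1
      have h2 : 0 ≤ (S T₁) ^ (-q) := (Real.rpow_pos_of_pos (hpos T₁) _).le
      have h3 : (t:ℝ) * c / 2 ≤ (n:ℝ) * c := by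
        have := mul_le_mul_of_nonneg_right hncast hc.le
        linarith
      linarith
    have htc : (0:ℝ) < (t:ℝ) * c / 2 := by
      have := mul_pos ht0 hc
      linarith
    have hSbound : S t ≤ ((t:ℝ) * c / 2) ^ (-(1 / q)) := by
      have h1 : ((S t) ^ (-q)) ^ (-(1 / q)) ≤ ((t:ℝ) * c / 2) ^ (-(1 / q)) :=
        rpow_neg_anti (by positivity) htc hf
      have e : ((S t) ^ (-q)) ^ (-(1 / q)) = S t := by
        rw [← Real.rpow_mul (hSnonneg t), show (-q) * (-(1 / q)) = 1 by
          field_simp]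
        exact Real.rpow_one _
      rw [e] at h1
      exact h1
    have hsplit : ((t:ℝ) * c / 2) ^ (-(1 / q)) = (c / 2) ^ (-(1 / q)) * (t:ℝ) ^ (-(1 / q)) := by
      rw [show (t:ℝ) * c / 2 = (t:ℝ) * (c / 2) by ring,
        Real.mul_rpow (Nat.cast_nonneg t) (div_nonneg hc.le (by norm_num))]
      ring
    rw [heq]
    calc r t ≤ S t := hrS' t
      _ ≤ ((t:ℝ) * c / 2) ^ (-(1 / q)) := hSbound
      _ = (c / 2) ^ (-(1 / q)) * (t:ℝ) ^ (-(1 / q)) := hsplit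
  · -- degenerate case: some tail is ≤ 0, hence all later tails vanish
    push_neg at hpos
    obtain ⟨t₀, ht₀⟩ := hpos
    refine ⟨1, one_pos, max t₀ 1, fun t ht => ?_⟩
    have h1 : S t ≤ 0 := le_trans (hSanti (le_trans (le_max_left _ _) ht)) ht₀
    have h2 : (0:ℝ) ≤ ((t:ℝ)) ^ (-(θ / (1 - 2 * θ))) :=
      Real.rpow_nonneg (Nat.cast_nonneg t) _
    have := hrS' t
    linarith
end
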